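/- Let D, D^⊥ ⊆ Q^n(q^s) be mutually dual linear distributions of dimensions d and ns - d. For 0 ≤ δ ≤ d, the following are equivalent: (i) every elementary box in E_s(q,n) of volume q^{δ-d} contains exactly q^δ points of D; (ii) the minimum nonzero ρ-weight of D^⊥ is at least d - δ + 1. -/

import Mathlib

/-- Rosenbloom–Tsfasman weight of a row vector. -/
def rhoRow {F : Type*} [Zero F] [DecidableEq F] {s : ℕ} (ω : Fin s → F) : ℕ :=
  (Finset.univ.filter fun j => ω j ≠ 0).sup fun j => j.1 + 1

/-- Rosenbloom–Tsfasman weight of a matrix: the sum of the ρ-weights of its rows. -/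
def rhoMat {F : Type*} [Zero F] [DecidableEq F] {n s : ℕ}
    (Ω : Matrix (Fin n) (Fin s) F) : ℕ :=
  ∑ i, rhoRow (Ω i)

/-- The inner product `⟨X,Y⟩ = Σ_j Σ_i ξ_i(x_j)·ξ_{s+1-i}(y_j)` on the space of digit
arrays, pairing the digits of each coordinate in reversed order. -/
def rtInner {F : Type*} [Field F] {n s : ℕ} (Ω₁ Ω₂ : Matrix (Fin n) (Fin s) F) : F :=
  ∑ j, ∑ i, Ω₁ j i * Ω₂ j i.rev

/-- The dual of a linear distribution with respect to `rtInner`. -/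
def dualCode {F : Type*} [Field F] {n s : ℕ}
    (C : Submodule F (Matrix (Fin n) (Fin s) F)) :
    Submodule F (Matrix (Fin n) (Fin s) F) where
  carrier := {Ω' | ∀ Ω ∈ C, rtInner Ω Ω' = 0}
  zero_mem' := by intro Ω hΩ; simp [rtInner]
  add_mem' := by
    intro a b ha hb Ω hΩ
    have : rtInner Ω (a + b) = rtInner Ω a + rtInner Ω b := by
      simp [rtInner, Matrix.add_apply, mul_add, Finset.sum_add_distrib]
    rw [this, ha Ω hΩ, hb Ω hΩ, add_zero]
  smul_mem' := by
    intro c a ha Ω hΩ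
    have : rtInner Ω (c • a) = c * rtInner Ω a := by
      simp only [rtInner, Matrix.smul_apply, smul_eq_mul, Finset.mul_sum]
      exact Finset.sum_congr rfl fun j _ => Finset.sum_congr rfl fun i _ => by ring
    rw [this, ha Ω hΩ, mul_zero]

/-- The `j`-th coordinate of the point of `[0,1)^n` whose `q`-ary digits are given
(via the bijection `φ`) by the digit array `Ω`: `x_j = Σ_{i=1}^s ξ_i(x_j) q^{i-s-1}`. -/
noncomputable def coordOf {q : ℕ} {F : Type*} (φ : F ≃ Fin q) {n s : ℕ}
    (Ω : Matrix (Fin n) (Fin s) F) (j : Fin n) : ℝ :=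
  ∑ i : Fin s, ((φ (Ω j i) : ℕ) : ℝ) * (q : ℝ) ^ ((i : ℤ) + 1 - s - 1)


set_option linter.unusedSectionVars false
set_option linter.unusedVariables false
set_option maxHeartbeats 1000000

namespace RTAux

open Finset

variable {q n s : ℕ} {F : Type*} [Field F] [Fintype F] [DecidableEq F]

/-! ### digit machinery -/

/-- `i`-th digit (as a natural number) of a row. -/
def dig (φ : F ≃ Fin q) {s : ℕ} (ω : Fin s → F) (i : ℕ) : ℕ :=
  if h : i < s then (φ (ω ⟨i, h⟩) : ℕ) else 0

/-- Value of a row as an integer in `[0, q^s)`. -/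
def nval (φ : F ≃ Fin q) {s : ℕ} (ω : Fin s → F) : ℕ :=
  ∑ i ∈ range s, dig φ ω i * q ^ i

/-- Value of the top `a` digits of a row. -/
def topval (φ : F ≃ Fin q) {s : ℕ} (a : ℕ) (ω : Fin s → F) : ℕ :=
  ∑ k ∈ range a, dig φ ω (s - a + k) * q ^ k

lemma dig_lt (hq0 : 0 < q) (φ : F ≃ Fin q) (ω : Fin s → F) (i : ℕ) : dig φ ω i < q := by
  unfold dig; split
  · exact (φ _).isLt
  · exact hq0

lemma sum_lt_pow (hq0 : 0 < q) {t : ℕ} {f : ℕ → ℕ} (hf : ∀ k, k < t → f k < q) :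
    ∑ k ∈ range t, f k * q ^ k < q ^ t := by
  induction t with
  | zero => simp
  | succ t ih =>
    rw [Finset.sum_range_succ]
    have h1 := ih (fun k hk => hf k (by omega))
    have h2 : f t ≤ q - 1 := by have := hf t (by omega); omega
    have h3 : f t * q ^ t ≤ (q - 1) * q ^ t := Nat.mul_le_mul_right _ h2
    have h4 : q ^ t + (q - 1) * q ^ t = q ^ (t + 1) := by
      have hq1 : 1 + (q - 1) = q := by omega
      calc q ^ t + (q - 1) * q ^ t = (1 + (q - 1)) * q ^ t := by ring
        _ = q * q ^ t := by rw [hq1]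
        _ = q ^ (t + 1) := by ring
    calc ∑ k ∈ range t, f k * q ^ k + f t * q ^ t < q ^ t + (q - 1) * q ^ t :=
          add_lt_add_of_lt_of_le h1 h3
      _ = q ^ (t + 1) := h4

lemma nval_lt (hq0 : 0 < q) (φ : F ≃ Fin q) (ω : Fin s → F) : nval φ ω < q ^ s :=
  sum_lt_pow hq0 (fun k _ => dig_lt hq0 φ ω k)

lemma topval_lt (hq0 : 0 < q) (φ : F ≃ Fin q) (a : ℕ) (ω : Fin s → F) :
    topval φ a ω < q ^ a :=
  sum_lt_pow hq0 (fun k _ => dig_lt hq0 φ ω _)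

lemma sum_mod (hq0 : 0 < q) (m a : ℕ) :
    ∑ k ∈ range a, (m / q ^ k % q) * q ^ k = m % q ^ a := by
  induction a with
  | zero => simp [Nat.mod_one]
  | succ a ih => rw [Finset.sum_range_succ, ih, Nat.mod_pow_succ]; ring

lemma digits_inj (hq0 : 0 < q) :
    ∀ (a : ℕ) (f g : ℕ → ℕ), (∀ k, k < a → f k < q) → (∀ k, k < a → g k < q) →
      (∑ k ∈ range a, f k * q ^ k) = (∑ k ∈ range a, g k * q ^ k) →
      ∀ k, k < a → f k = g k := by
  intro a
  induction a with
  | zero => intro f g _ _ _ k hk; omega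
  | succ a ih =>
    intro f g hf hg hsum k hk
    rw [Finset.sum_range_succ', Finset.sum_range_succ'] at hsum
    have h1 : ∀ h : ℕ → ℕ, ∑ i ∈ range a, h (i + 1) * q ^ (i + 1)
        = q * ∑ i ∈ range a, h (i + 1) * q ^ i := by
      intro h; rw [Finset.mul_sum]; exact Finset.sum_congr rfl fun i _ => by ring
    rw [h1 f, h1 g] at hsum
    simp only [pow_zero, mul_one] at hsum
    have hf0 : f 0 < q := hf 0 (by omega)
    have hg0 : g 0 < q := hg 0 (by omega)
    have h0 : f 0 = g 0 := by
      have := congrArg (· % q) hsum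
      simpa [Nat.mul_add_mod, Nat.mod_eq_of_lt hf0, Nat.mod_eq_of_lt hg0] using this
    rcases Nat.eq_zero_or_pos k with rfl | hkpos
    · exact h0
    · have hS : (∑ i ∈ range a, f (i + 1) * q ^ i) = ∑ i ∈ range a, g (i + 1) * q ^ i :=
        Nat.eq_of_mul_eq_mul_left hq0 (by omega)
      have := ih (fun i => f (i + 1)) (fun i => g (i + 1))
        (fun i hi => hf (i + 1) (by omega)) (fun i hi => hg (i + 1) (by omega)) hS
        (k - 1) (by omega)
      simpa [Nat.sub_add_cancel hkpos] using this

/-- Splitting the value of a row into low part and top part. -/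
lemma nval_split (φ : F ≃ Fin q) {a : ℕ} (ha : a ≤ s) (ω : Fin s → F) :
    nval φ ω = (∑ i ∈ range (s - a), dig φ ω i * q ^ i) + topval φ a ω * q ^ (s - a) := by
  unfold nval topval
  have h1 : ∑ i ∈ range s, dig φ ω i * q ^ i
      = ∑ i ∈ range ((s - a) + a), dig φ ω i * q ^ i := by
    rw [Nat.sub_add_cancel ha]
  rw [h1, Finset.sum_range_add]
  congr 1
  rw [Finset.sum_mul]
  exact Finset.sum_congr rfl fun k _ => by rw [pow_add]; ring

lemma nat_window {Q low t m : ℕ} (hlow : low < Q) :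
    (m * Q ≤ low + t * Q ∧ low + t * Q < (m + 1) * Q) ↔ t = m := by
  constructor
  · rintro ⟨h1, h2⟩
    rcases lt_trichotomy t m with h | h | h
    · exfalso
      have h3 : (t + 1) * Q ≤ m * Q := Nat.mul_le_mul_right _ h
      have h4 : (t + 1) * Q = t * Q + Q := by ring
      linarith
    · exact h
    · exfalso
      have h3 : (m + 1) * Q ≤ t * Q := Nat.mul_le_mul_right _ h
      linarith
  · rintro rfl
    refine ⟨Nat.le_add_left _ _, ?_⟩
    have h4 : (t + 1) * Q = t * Q + Q := by ring
    linarith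

lemma coordOf_eq (hq0 : 0 < q) (φ : F ≃ Fin q) (Ω : Matrix (Fin n) (Fin s) F) (j : Fin n) :
    coordOf φ Ω j = (nval φ (Ω j) : ℝ) / (q : ℝ) ^ s := by
  have hqR : (0 : ℝ) < (q : ℝ) := by exact_mod_cast hq0
  unfold coordOf nval
  rw [Nat.cast_sum, Finset.sum_div,
    ← Fin.sum_univ_eq_sum_range (fun i => ((dig φ (Ω j) i * q ^ i : ℕ) : ℝ) / (q : ℝ) ^ s) s]
  apply Finset.sum_congr rfl
  intro i _
  have hi : (i : ℕ) < s := i.isLt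
  have hdig : dig φ (Ω j) (i : ℕ) = (φ (Ω j i) : ℕ) := by
    unfold dig; rw [dif_pos hi]
  rw [hdig]
  have hexp : ((i : ℤ) + 1 - s - 1) = (i : ℤ) - (s : ℤ) := by ring
  rw [hexp, zpow_sub₀ (ne_of_gt hqR), zpow_natCast, zpow_natCast]
  push_cast
  ring

lemma real_box_iff (hq0 : 0 < q) {a : ℕ} (ha : a ≤ s) (N m : ℕ) :
    ((m : ℝ) / (q : ℝ) ^ a ≤ (N : ℝ) / (q : ℝ) ^ s ∧
      (N : ℝ) / (q : ℝ) ^ s < ((m : ℝ) + 1) / (q : ℝ) ^ a) ↔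
    (m * q ^ (s - a) ≤ N ∧ N < (m + 1) * q ^ (s - a)) := by
  have hqR : (0 : ℝ) < (q : ℝ) := by exact_mod_cast hq0
  have hpa : (0 : ℝ) < (q : ℝ) ^ a := pow_pos hqR a
  have hps : (0 : ℝ) < (q : ℝ) ^ s := pow_pos hqR s
  have hss : (q : ℝ) ^ s = (q : ℝ) ^ (s - a) * (q : ℝ) ^ a := by
    rw [← pow_add]; congr 1; omega
  have e1 : ((m : ℝ) / (q : ℝ) ^ a ≤ (N : ℝ) / (q : ℝ) ^ s) ↔ (m * q ^ (s - a) ≤ N) := by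
    rw [div_le_div_iff₀ hpa hps, hss, ← mul_assoc, mul_le_mul_iff_of_pos_right hpa]
    constructor <;> intro h <;> exact_mod_cast h
  have e2 : ((N : ℝ) / (q : ℝ) ^ s < ((m : ℝ) + 1) / (q : ℝ) ^ a) ↔
      (N < (m + 1) * q ^ (s - a)) := by
    rw [div_lt_div_iff₀ hps hpa, hss, ← mul_assoc, mul_lt_mul_iff_of_pos_right hpa]
    constructor <;> intro h <;> exact_mod_cast h
  exact and_congr e1 e2

/-- The box condition on a row is equivalent to prescribing the top digits. -/
lemma box_iff (hq0 : 0 < q) (φ : F ≃ Fin q) {a m : ℕ} (ha : a ≤ s) (hm : m < q ^ a)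
    (ω : Fin s → F) :
    ((m : ℝ) / (q : ℝ) ^ a ≤ (nval φ ω : ℝ) / (q : ℝ) ^ s ∧
      (nval φ ω : ℝ) / (q : ℝ) ^ s < ((m : ℝ) + 1) / (q : ℝ) ^ a) ↔ topval φ a ω = m := by
  rw [real_box_iff hq0 ha, nval_split φ ha ω]
  exact nat_window (sum_lt_pow hq0 (fun k _ => dig_lt hq0 φ ω k))

/-! ### submodules and truncation -/

/-- Matrices whose rows are supported on positions `< A j` (low positions). -/
def Vsub (F : Type*) [Field F] (s : ℕ) {n : ℕ} (A : Fin n → ℕ) :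
    Submodule F (Matrix (Fin n) (Fin s) F) where
  carrier := {Ω | ∀ j i, A j ≤ (i : Fin s).1 → Ω j i = 0}
  add_mem' := fun hx hy j i h => by simp [Matrix.add_apply, hx j i h, hy j i h]
  zero_mem' := fun j i h => rfl
  smul_mem' := fun c x hx j i h => by simp [Matrix.smul_apply, hx j i h]

/-- Matrices whose rows are supported on positions `≥ s - A j` (top positions). -/
def Wsub (F : Type*) [Field F] (s : ℕ) {n : ℕ} (A : Fin n → ℕ) :
    Submodule F (Matrix (Fin n) (Fin s) F) where
  carrier := {Ω | ∀ j i, (i : Fin s).1 < s - A j → Ω j i = 0}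
  add_mem' := fun hx hy j i h => by simp [Matrix.add_apply, hx j i h, hy j i h]
  zero_mem' := fun j i h => rfl
  smul_mem' := fun c x hx j i h => by simp [Matrix.smul_apply, hx j i h]

/-- The linear projection onto top positions. -/
def Pmap (F : Type*) [Field F] {n : ℕ} (s : ℕ) (A : Fin n → ℕ) :
    Matrix (Fin n) (Fin s) F →ₗ[F] Matrix (Fin n) (Fin s) F where
  toFun Ω := Matrix.of fun j i => if s - A j ≤ (i : ℕ) then Ω j i else 0
  map_add' X Y := by
    ext j i
    simp only [Matrix.of_apply, Matrix.add_apply]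
    split <;> simp
  map_smul' c X := by
    ext j i
    simp only [Matrix.of_apply, Matrix.smul_apply, RingHom.id_apply, smul_eq_mul]
    split <;> simp

lemma Pmap_apply {A : Fin n → ℕ} (Ω : Matrix (Fin n) (Fin s) F) (j : Fin n) (i : Fin s) :
    Pmap F s A Ω j i = if s - A j ≤ (i : ℕ) then Ω j i else 0 := rfl

lemma Pmap_mem_Wsub {A : Fin n → ℕ} (Ω : Matrix (Fin n) (Fin s) F) :
    Pmap F s A Ω ∈ Wsub F s A := fun j i h => by
  rw [Pmap_apply, if_neg (by omega)]

/-- Canonical element of `Wsub` whose top digits are the `q`-ary digits of `m`. -/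
def embM (hq0 : 0 < q) (φ : F ≃ Fin q) {n : ℕ} (s : ℕ) (A m : Fin n → ℕ) :
    Matrix (Fin n) (Fin s) F :=
  Matrix.of fun j i =>
    if h : s - A j ≤ (i : ℕ) then
      φ.symm ⟨m j / q ^ ((i : ℕ) - (s - A j)) % q, Nat.mod_lt _ hq0⟩
    else 0

lemma embM_mem_Wsub (hq0 : 0 < q) (φ : F ≃ Fin q) (A m : Fin n → ℕ) :
    embM hq0 φ s A m ∈ Wsub F s A := fun j i h => by
  simp only [embM, Matrix.of_apply]
  rw [dif_neg (by omega)]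

lemma topval_embM (hq0 : 0 < q) (φ : F ≃ Fin q) {A m : Fin n → ℕ} {j : Fin n}
    (ha : A j ≤ s) (hm : m j < q ^ A j) :
    topval φ (A j) (embM hq0 φ s A m j) = m j := by
  unfold topval
  have hterm : ∀ k ∈ range (A j),
      dig φ (embM hq0 φ s A m j) (s - A j + k) * q ^ k = (m j / q ^ k % q) * q ^ k := by
    intro k hk
    rw [Finset.mem_range] at hk
    have hlt : s - A j + k < s := by omega
    congr 1
    unfold dig
    rw [dif_pos hlt]
    simp only [embM, Matrix.of_apply]
    rw [dif_pos (by simp)]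
    simp only [Nat.add_sub_cancel_left, Equiv.apply_symm_apply]
  rw [Finset.sum_congr rfl hterm, sum_mod hq0, Nat.mod_eq_of_lt hm]

lemma topval_inj (hq0 : 0 < q) (φ : F ≃ Fin q) {A : Fin n → ℕ} (hA : ∀ j, A j ≤ s)
    {X Y : Matrix (Fin n) (Fin s) F} (hX : X ∈ Wsub F s A) (hY : Y ∈ Wsub F s A)
    (h : ∀ j, topval φ (A j) (X j) = topval φ (A j) (Y j)) : X = Y := by
  ext j i
  by_cases hi : (i : ℕ) < s - A j
  · rw [hX j i hi, hY j i hi]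
  · have hdig := digits_inj hq0 (A j) (fun k => dig φ (X j) (s - A j + k))
      (fun k => dig φ (Y j) (s - A j + k))
      (fun k _ => dig_lt hq0 φ _ _) (fun k _ => dig_lt hq0 φ _ _) (h j)
      ((i : ℕ) - (s - A j)) (by have := i.isLt; omega)
    have hidx : s - A j + ((i : ℕ) - (s - A j)) = (i : ℕ) := by omega
    rw [hidx] at hdig
    unfold dig at hdig
    rw [dif_pos i.isLt, dif_pos i.isLt] at hdig
    simp only [Fin.eta] at hdig
    exact φ.injective (Fin.val_injective hdig)

lemma topval_Pmap (φ : F ≃ Fin q) {A : Fin n → ℕ} (Ω : Matrix (Fin n) (Fin s) F) (j : Fin n) :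
    topval φ (A j) (Pmap F s A Ω j) = topval φ (A j) (Ω j) := by
  unfold topval
  apply Finset.sum_congr rfl
  intro k _
  congr 1
  unfold dig
  split
  · next hlt =>
    simp only [Pmap_apply]
    rw [if_pos (by simp)]
  · rfl

/-! ### the bilinear form -/

def rtForm (F : Type*) [Field F] (n s : ℕ) :
    LinearMap.BilinForm F (Matrix (Fin n) (Fin s) F) :=
  LinearMap.mk₂ F rtInner
    (fun X X' Y => by
      simp only [rtInner, Matrix.add_apply, add_mul, Finset.sum_add_distrib])
    (fun c X Y => by
      simp only [rtInner, Matrix.smul_apply, smul_eq_mul, Finset.mul_sum]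
      exact Finset.sum_congr rfl fun j _ => Finset.sum_congr rfl fun i _ => by ring)
    (fun X Y Y' => by
      simp only [rtInner, Matrix.add_apply, mul_add, Finset.sum_add_distrib])
    (fun c X Y => by
      simp only [rtInner, Matrix.smul_apply, smul_eq_mul, Finset.mul_sum]
      exact Finset.sum_congr rfl fun j _ => Finset.sum_congr rfl fun i _ => by ring)

lemma rtForm_apply (X Y : Matrix (Fin n) (Fin s) F) : rtForm F n s X Y = rtInner X Y := rfl

lemma rtInner_comm (X Y : Matrix (Fin n) (Fin s) F) : rtInner X Y = rtInner Y X := by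
  unfold rtInner
  apply Finset.sum_congr rfl
  intro j _
  exact Fintype.sum_equiv Fin.revPerm _ _ (fun i => by
    simp only [Fin.revPerm_apply, Fin.rev_rev]
    ring)

/-- A single-entry matrix. -/
def single (j₀ : Fin n) (k₀ : Fin s) (c : F) : Matrix (Fin n) (Fin s) F :=
  Matrix.of fun j i => if j = j₀ ∧ i = k₀ then c else 0

lemma rtInner_single_right (X : Matrix (Fin n) (Fin s) F) (j₀ : Fin n) (k₀ : Fin s) (c : F) :
    rtInner X (single j₀ k₀ c) = X j₀ k₀.rev * c := by
  unfold rtInner single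
  rw [Finset.sum_eq_single j₀]
  · rw [Finset.sum_eq_single k₀.rev]
    · simp [Fin.rev_rev]
    · intro i _ hne
      simp only [Matrix.of_apply]
      rw [if_neg, mul_zero]
      rintro ⟨-, h2⟩
      exact hne (by rw [← Fin.rev_rev i, h2])
    · intro h; exact absurd (Finset.mem_univ _) h
  · intro j _ hne
    apply Finset.sum_eq_zero
    intro i _
    simp only [Matrix.of_apply]
    rw [if_neg (fun h => hne h.1), mul_zero]
  · intro h; exact absurd (Finset.mem_univ _) h

lemma rtInner_single_left (X : Matrix (Fin n) (Fin s) F) (j₀ : Fin n) (k₀ : Fin s) (c : F) :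
    rtInner (single j₀ k₀ c) X = c * X j₀ k₀.rev := by
  rw [rtInner_comm, rtInner_single_right]; ring

lemma rtForm_nondeg : (rtForm F n s).Nondegenerate := by
  refine ⟨fun X h => ?_, fun X h => ?_⟩
  · ext j i
    have := h (single j i.rev 1)
    rw [rtForm_apply, rtInner_single_right, Fin.rev_rev, mul_one] at this
    simpa using this
  · ext j i
    have := h (single j i.rev 1)
    rw [rtForm_apply, rtInner_single_left, Fin.rev_rev, one_mul] at this
    simpa using this

lemma rtForm_refl : (rtForm F n s).IsRefl := fun X Y h => by
  rwa [rtForm_apply, rtInner_comm] at h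

lemma dualCode_eq (D : Submodule F (Matrix (Fin n) (Fin s) F)) :
    dualCode D = (rtForm F n s).orthogonal D := rfl

/-- Pairing between a low-supported matrix and a matrix vanishing on top positions is zero. -/
lemma rtInner_zero_of {A : Fin n → ℕ} (hA : ∀ j, A j ≤ s) {X Y : Matrix (Fin n) (Fin s) F}
    (hX : ∀ j i, s - A j ≤ (i : Fin s).1 → X j i = 0) (hY : Y ∈ Vsub F s A) :
    rtInner X Y = 0 := by
  unfold rtInner
  apply Finset.sum_eq_zero; intro j _
  apply Finset.sum_eq_zero; intro i _
  by_cases h : s - A j ≤ (i : ℕ)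
  · rw [hX j i h, zero_mul]
  · rw [hY j i.rev (by rw [Fin.val_rev]; have := i.isLt; have := hA j; omega), mul_zero]

lemma rtInner_Pmap {A : Fin n → ℕ} (hA : ∀ j, A j ≤ s) {x : Matrix (Fin n) (Fin s) F}
    (hx : x ∈ Vsub F s A) (Ω : Matrix (Fin n) (Fin s) F) :
    rtInner Ω x = rtInner (Pmap F s A Ω) x := by
  have h0 : rtInner (Ω - Pmap F s A Ω) x = 0 :=
    rtInner_zero_of hA (fun j i h => by
      simp only [Matrix.sub_apply, Pmap_apply, if_pos h, sub_self]) hx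
  have h1 : rtInner (Ω - Pmap F s A Ω) x = rtInner Ω x - rtInner (Pmap F s A Ω) x := by
    have hsub := map_sub (rtForm F n s) Ω (Pmap F s A Ω)
    calc rtInner (Ω - Pmap F s A Ω) x = rtForm F n s (Ω - Pmap F s A Ω) x := rfl
      _ = rtForm F n s Ω x - rtForm F n s (Pmap F s A Ω) x := by rw [hsub]; rfl
      _ = rtInner Ω x - rtInner (Pmap F s A Ω) x := rfl
  rw [h1] at h0
  exact sub_eq_zero.mp h0

/-! ### cardinalities -/

def vsubEquiv {A : Fin n → ℕ} (hA : ∀ j, A j ≤ s) :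
    (Vsub F s A) ≃ (∀ j : Fin n, Fin (A j) → F) where
  toFun Ω j k := Ω.1 j ⟨k, lt_of_lt_of_le k.2 (hA j)⟩
  invFun f := ⟨Matrix.of fun j i => if h : (i : ℕ) < A j then f j ⟨i, h⟩ else 0,
    fun j i h => by simp only [Matrix.of_apply]; rw [dif_neg (by omega)]⟩
  left_inv Ω := by
    apply Subtype.ext
    ext j i
    simp only [Matrix.of_apply]
    split
    · rfl
    · next h => exact (Ω.2 j i (by omega)).symm
  right_inv f := by
    funext j k
    simp only [Matrix.of_apply]
    rw [dif_pos k.2]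

def wsubEquiv {A : Fin n → ℕ} (hA : ∀ j, A j ≤ s) :
    (Wsub F s A) ≃ (∀ j : Fin n, Fin (A j) → F) where
  toFun Ω j k := Ω.1 j ⟨s - A j + k, by have := k.2; have := hA j; omega⟩
  invFun f := ⟨Matrix.of fun j i =>
      if h : s - A j ≤ (i : ℕ) then
        f j ⟨(i : ℕ) - (s - A j), by have := i.isLt; have := hA j; omega⟩
      else 0,
    fun j i h => by simp only [Matrix.of_apply]; rw [dif_neg (by omega)]⟩
  left_inv Ω := by
    apply Subtype.ext
    ext j i
    simp only [Matrix.of_apply]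
    split
    · next h =>
      simp only [Nat.add_sub_cancel' h, Fin.eta]
    · next h => exact (Ω.2 j i (by omega)).symm
  right_inv f := by
    funext j k
    simp only [Matrix.of_apply]
    rw [dif_pos (Nat.le_add_right _ _)]
    congr 1
    apply Fin.ext
    simp only [Nat.add_sub_cancel_left]

lemma card_pi_digits (hq : Fintype.card F = q) (A : Fin n → ℕ) :
    Nat.card (∀ j : Fin n, Fin (A j) → F) = q ^ (∑ j, A j) := by
  rw [Nat.card_eq_fintype_card, Fintype.card_pi]
  have h : ∀ j : Fin n, Fintype.card (Fin (A j) → F) = q ^ A j := by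
    intro j
    rw [Fintype.card_fun, hq, Fintype.card_fin]
  rw [Finset.prod_congr rfl (fun j _ => h j), Finset.prod_pow_eq_pow_sum]

lemma card_Vsub (hq : Fintype.card F = q) {A : Fin n → ℕ} (hA : ∀ j, A j ≤ s) :
    Nat.card (Vsub F s A) = q ^ (∑ j, A j) := by
  rw [Nat.card_congr (vsubEquiv hA), card_pi_digits hq]

lemma card_Wsub (hq : Fintype.card F = q) {A : Fin n → ℕ} (hA : ∀ j, A j ≤ s) :
    Nat.card (Wsub F s A) = q ^ (∑ j, A j) := by
  rw [Nat.card_congr (wsubEquiv hA), card_pi_digits hq]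

lemma card_submodule (hq : Fintype.card F = q) (U : Submodule F (Matrix (Fin n) (Fin s) F)) :
    Nat.card U = q ^ (Module.finrank F U) := by
  classical
  letI : Fintype U := Fintype.ofFinite U
  rw [Nat.card_eq_fintype_card, Module.card_eq_pow_finrank (K := F), hq]

lemma finrank_Vsub (hq : Fintype.card F = q) (hq2 : 1 < q) {A : Fin n → ℕ}
    (hA : ∀ j, A j ≤ s) : Module.finrank F (Vsub F s A) = ∑ j, A j := by
  apply Nat.pow_right_injective hq2
  show q ^ _ = q ^ _
  rw [← card_submodule hq, card_Vsub hq hA]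

lemma finrank_Wsub (hq : Fintype.card F = q) (hq2 : 1 < q) {A : Fin n → ℕ}
    (hA : ∀ j, A j ≤ s) : Module.finrank F (Wsub F s A) = ∑ j, A j := by
  apply Nat.pow_right_injective hq2
  show q ^ _ = q ^ _
  rw [← card_submodule hq, card_Wsub hq hA]

lemma finrank_total : Module.finrank F (Matrix (Fin n) (Fin s) F) = n * s := by
  rw [Module.finrank_matrix, Fintype.card_fin, Fintype.card_fin, Module.finrank_self, mul_one]

lemma nat_card_sigma {ι : Type*} [Fintype ι] (f : ι → Type*) [∀ i, Finite (f i)] :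
    Nat.card (Σ i, f i) = ∑ i, Nat.card (f i) := by
  letI := fun i => Fintype.ofFinite (f i)
  simp only [Nat.card_eq_fintype_card, Fintype.card_sigma]

/-! ### the duality step -/

lemma map_le_Wsub {A : Fin n → ℕ} (D : Submodule F (Matrix (Fin n) (Fin s) F)) :
    Submodule.map (Pmap F s A) D ≤ Wsub F s A := by
  rintro x ⟨y, -, rfl⟩
  exact Pmap_mem_Wsub y

lemma orth_inf_eq {A : Fin n → ℕ} (hA : ∀ j, A j ≤ s)
    (D : Submodule F (Matrix (Fin n) (Fin s) F)) :
    (rtForm F n s).orthogonal (Submodule.map (Pmap F s A) D) ⊓ Vsub F s A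
      = dualCode D ⊓ Vsub F s A := by
  ext x
  simp only [Submodule.mem_inf]
  constructor
  · rintro ⟨h1, h2⟩
    refine ⟨fun Ω hΩ => ?_, h2⟩
    have := h1 (Pmap F s A Ω) ⟨Ω, hΩ, rfl⟩
    rw [rtInner_Pmap hA h2 Ω]
    exact this
  · rintro ⟨h1, h2⟩
    refine ⟨?_, h2⟩
    rintro Y ⟨Ω, hΩ, rfl⟩
    show rtInner (Pmap F s A Ω) x = 0
    rw [← rtInner_Pmap hA h2 Ω]
    exact h1 Ω hΩ

lemma map_eq_iff (hq : Fintype.card F = q) (hq2 : 1 < q) {A : Fin n → ℕ} (hA : ∀ j, A j ≤ s)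
    (D : Submodule F (Matrix (Fin n) (Fin s) F)) :
    Submodule.map (Pmap F s A) D = Wsub F s A ↔ dualCode D ⊓ Vsub F s A = ⊥ := by
  constructor
  · intro hmap
    rw [← orth_inf_eq hA D, hmap, eq_bot_iff]
    rintro x ⟨hx1, hx2⟩
    show x = 0
    ext j i
    by_cases h : (i : ℕ) < A j
    · have hY : single j i.rev (1 : F) ∈ Wsub F s A := by
        intro j' i' hlt
        simp only [single, Matrix.of_apply]
        rw [if_neg]
        rintro ⟨rfl, rfl⟩
        rw [Fin.val_rev] at hlt
        have := i.isLt
        have := hA j'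
        omega
      have h0 := hx1 (single j i.rev 1) hY
      have : rtInner (single j i.rev (1 : F)) x = 0 := h0
      rw [rtInner_single_left, Fin.rev_rev, one_mul] at this
      simpa using this
    · exact hx2 j i (by omega)
  · intro hbot
    refine Submodule.eq_of_le_of_finrank_le (map_le_Wsub D) ?_
    have h1 : (rtForm F n s).orthogonal (Submodule.map (Pmap F s A) D) ⊓ Vsub F s A = ⊥ := by
      rw [orth_inf_eq hA D, hbot]
    have h2 := Submodule.finrank_sup_add_finrank_inf_eq
      ((rtForm F n s).orthogonal (Submodule.map (Pmap F s A) D)) (Vsub F s A)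
    rw [h1, finrank_bot, add_zero] at h2
    have h3 := Submodule.finrank_le
      ((rtForm F n s).orthogonal (Submodule.map (Pmap F s A) D) ⊔ Vsub F s A)
    rw [finrank_total] at h3
    have h4 : Module.finrank F ((rtForm F n s).orthogonal (Submodule.map (Pmap F s A) D))
        = n * s - Module.finrank F (Submodule.map (Pmap F s A) D) := by
      rw [LinearMap.BilinForm.finrank_orthogonal rtForm_nondeg, finrank_total]
    have h5 : Module.finrank F (Vsub F s A) = ∑ j, A j := finrank_Vsub hq hq2 hA
    have h6 : Module.finrank F (Wsub F s A) = ∑ j, A j := finrank_Wsub hq hq2 hA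
    have h7 := Submodule.finrank_le (Submodule.map (Pmap F s A) D)
    rw [finrank_total] at h7
    omega

/-! ### the counting step -/

lemma count_iff (hq : Fintype.card F = q) (hq0 : 0 < q) (φ : F ≃ Fin q) {d δ : ℕ}
    {A : Fin n → ℕ} (hA : ∀ j, A j ≤ s) (D : Submodule F (Matrix (Fin n) (Fin s) F))
    (hcardD : Nat.card D = q ^ d) (hsum : (∑ j, A j) + δ = d) :
    (∀ m : Fin n → ℕ, (∀ j, m j < q ^ A j) →
        Nat.card {Ω : Matrix (Fin n) (Fin s) F // Ω ∈ D ∧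
          ∀ j, topval φ (A j) (Ω j) = m j} = q ^ δ) ↔
      Submodule.map (Pmap F s A) D = Wsub F s A := by
  classical
  have key : ∀ (m : Fin n → ℕ), (∀ j, m j < q ^ A j) →
      ∀ Ω : Matrix (Fin n) (Fin s) F,
        ((∀ j, topval φ (A j) (Ω j) = m j) ↔ Pmap F s A Ω = embM hq0 φ s A m) := by
    intro m hm Ω
    constructor
    · intro h
      apply topval_inj hq0 φ hA (Pmap_mem_Wsub Ω) (embM_mem_Wsub hq0 φ A m)
      intro j
      rw [topval_Pmap, h j, topval_embM hq0 φ (hA j) (hm j)]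
    · intro h j
      rw [← topval_Pmap φ Ω j, h, topval_embM hq0 φ (hA j) (hm j)]
  have hfib0 : ∀ Y : Matrix (Fin n) (Fin s) F,
      (∃ Ω₀, Ω₀ ∈ D ∧ Pmap F s A Ω₀ = Y) →
      Nat.card {Ω : Matrix (Fin n) (Fin s) F // Ω ∈ D ∧ Pmap F s A Ω = Y}
        = Nat.card {Ω : Matrix (Fin n) (Fin s) F // Ω ∈ D ∧ Pmap F s A Ω = 0} := by
    rintro Y ⟨Ω₀, hm1, hm2⟩
    apply Nat.card_congr
    refine ⟨fun x => ⟨x.1 - Ω₀, sub_mem x.2.1 hm1, by rw [map_sub, x.2.2, hm2, sub_self]⟩,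
      fun y => ⟨y.1 + Ω₀, add_mem y.2.1 hm1, by rw [map_add, y.2.2, hm2, zero_add]⟩,
      fun x => Subtype.ext (by simp), fun y => Subtype.ext (by simp)⟩
  constructor
  · intro h
    apply le_antisymm (map_le_Wsub D)
    intro Y hY
    set m : Fin n → ℕ := fun j => topval φ (A j) (Y j) with hmdef
    have hm : ∀ j, m j < q ^ A j := fun j => topval_lt hq0 φ _ _
    have hcnt := h m hm
    have hpos : 0 < Nat.card {Ω : Matrix (Fin n) (Fin s) F // Ω ∈ D ∧
        ∀ j, topval φ (A j) (Ω j) = m j} := by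
      rw [hcnt]; exact pow_pos hq0 δ
    obtain ⟨Ω, hΩ⟩ := (Nat.card_pos_iff.mp hpos).1
    have hYe : Y = embM hq0 φ s A m := by
      apply topval_inj hq0 φ hA hY (embM_mem_Wsub hq0 φ A m)
      intro j
      rw [topval_embM hq0 φ (hA j) (hm j)]
    rw [hYe, ← (key m hm Ω).mp hΩ.2]
    exact ⟨Ω, hΩ.1, rfl⟩
  · intro hmap m hm
    have hiff : ∀ Ω : Matrix (Fin n) (Fin s) F,
        (Ω ∈ D ∧ ∀ j, topval φ (A j) (Ω j) = m j) ↔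
          (Ω ∈ D ∧ Pmap F s A Ω = embM hq0 φ s A m) :=
      fun Ω => and_congr_right fun _ => key m hm Ω
    rw [Nat.card_congr (Equiv.subtypeEquivRight hiff)]
    have hWe : embM hq0 φ s A m ∈ Submodule.map (Pmap F s A) D := by
      rw [hmap]; exact embM_mem_Wsub hq0 φ A m
    obtain ⟨Ω₀, hΩ₀, hP⟩ := hWe
    -- fiber decomposition of D over Wsub A
    have hsig : (Nat.card {Ω : Matrix (Fin n) (Fin s) F // Ω ∈ D})
        = ∑ Y : Wsub F s A,
            Nat.card {Ω : Matrix (Fin n) (Fin s) F // Ω ∈ D ∧ Pmap F s A Ω = (Y : _)} := by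
      rw [← Nat.card_congr (Equiv.sigmaFiberEquiv
        (fun Ω : {Ω : Matrix (Fin n) (Fin s) F // Ω ∈ D} =>
          (⟨Pmap F s A Ω.1, Pmap_mem_Wsub Ω.1⟩ : Wsub F s A))), nat_card_sigma]
      apply Finset.sum_congr rfl
      intro Y _
      apply Nat.card_congr
      exact ⟨fun x => ⟨x.1.1, x.1.2, congrArg Subtype.val x.2⟩,
        fun x => ⟨⟨x.1, x.2.1⟩, Subtype.ext x.2.2⟩,
        fun x => rfl, fun x => rfl⟩
    have hconst : ∀ Y : Wsub F s A,
        Nat.card {Ω : Matrix (Fin n) (Fin s) F // Ω ∈ D ∧ Pmap F s A Ω = (Y : _)}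
          = Nat.card {Ω : Matrix (Fin n) (Fin s) F // Ω ∈ D ∧ Pmap F s A Ω = 0} := by
      intro Y
      apply hfib0
      have : (Y : Matrix (Fin n) (Fin s) F) ∈ Submodule.map (Pmap F s A) D := by
        rw [hmap]; exact Y.2
      obtain ⟨Ω₁, h1, h2⟩ := this
      exact ⟨Ω₁, h1, h2⟩
    rw [Finset.sum_congr rfl (fun Y _ => hconst Y), Finset.sum_const, smul_eq_mul] at hsig
    have hcW : (Finset.univ : Finset (Wsub F s A)).card = q ^ (∑ j, A j) := by
      rw [Finset.card_univ, ← Nat.card_eq_fintype_card, card_Wsub hq hA]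
    rw [hcW] at hsig
    have hDcard : (Nat.card {Ω : Matrix (Fin n) (Fin s) F // Ω ∈ D}) = q ^ d := hcardD
    rw [hDcard] at hsig
    have hd : q ^ d = q ^ (∑ j, A j) * q ^ δ := by rw [← pow_add, hsum]
    have hc : Nat.card {Ω : Matrix (Fin n) (Fin s) F // Ω ∈ D ∧ Pmap F s A Ω = 0} = q ^ δ := by
      apply Nat.eq_of_mul_eq_mul_left (pow_pos hq0 (∑ j, A j))
      rw [← hsig, ← hd]
    rw [hfib0 _ ⟨Ω₀, hΩ₀, hP⟩, hc]

/-! ### padding and rho -/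

lemma pad (n s : ℕ) : ∀ (k : ℕ) (B : Fin n → ℕ), (∀ j, B j ≤ s) → (∑ j, B j) + k ≤ n * s →
    ∃ A : Fin n → ℕ, (∀ j, B j ≤ A j) ∧ (∀ j, A j ≤ s) ∧ (∑ j, A j) = (∑ j, B j) + k := by
  intro k
  induction k with
  | zero => exact fun B hB _ => ⟨B, fun j => le_refl _, hB, by simp⟩
  | succ k ih =>
    intro B hB hle
    have hex : ∃ j, B j < s := by
      by_contra hco
      push_neg at hco
      have heq : ∀ j, B j = s := fun j => le_antisymm (hB j) (hco j)
      have hsum : ∑ j, B j = n * s := by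
        rw [Finset.sum_congr rfl (fun j _ => heq j), Finset.sum_const, Finset.card_univ,
          Fintype.card_fin, smul_eq_mul]
      omega
    obtain ⟨j₀, hj₀⟩ := hex
    classical
    have hupd : ∑ j, Function.update B j₀ (B j₀ + 1) j = (∑ j, B j) + 1 := by
      rw [Finset.sum_update_of_mem (Finset.mem_univ j₀)]
      have := Finset.add_sum_erase Finset.univ B (Finset.mem_univ j₀)
      rw [show (Finset.univ \ {j₀} : Finset (Fin n)) = Finset.univ.erase j₀ by
        rw [Finset.sdiff_singleton_eq_erase]]
      omega
    obtain ⟨A, h1, h2, h3⟩ := ih (Function.update B j₀ (B j₀ + 1))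
      (fun j => by
        rcases eq_or_ne j j₀ with rfl | hne
        · rw [Function.update_self]; omega
        · rw [Function.update_of_ne hne]; exact hB j)
      (by rw [hupd]; omega)
    refine ⟨A, fun j => ?_, h2, by rw [h3, hupd]; omega⟩
    rcases eq_or_ne j j₀ with rfl | hne
    · have := h1 j
      rw [Function.update_self] at this
      omega
    · have := h1 j
      rwa [Function.update_of_ne hne] at this

lemma rhoRow_le_iff {ω : Fin s → F} {a : ℕ} :
    rhoRow ω ≤ a ↔ ∀ i : Fin s, a ≤ (i : ℕ) → ω i = 0 := by
  unfold rhoRow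
  rw [Finset.sup_le_iff]
  constructor
  · intro h i hi
    by_contra hne
    have := h i (Finset.mem_filter.mpr ⟨Finset.mem_univ _, hne⟩)
    omega
  · intro h i hi
    rw [Finset.mem_filter] at hi
    by_contra hlt
    push_neg at hlt
    exact hi.2 (h i (by omega))

lemma mem_Vsub_iff_rho {A : Fin n → ℕ} {x : Matrix (Fin n) (Fin s) F} :
    x ∈ Vsub F s A ↔ ∀ j, rhoRow (x j) ≤ A j := by
  constructor
  · intro h j
    rw [rhoRow_le_iff]
    exact fun i hi => h j i hi
  · intro h j i hi
    exact rhoRow_le_iff.mp (h j) i hi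

lemma rhoRow_le_s (ω : Fin s → F) : rhoRow ω ≤ s :=
  Finset.sup_le fun i _ => i.isLt

end RTAux

theorem dual_distribution_box_count_iff_weight {q n s d δ : ℕ}
    (F : Type*) [Field F] [Fintype F] [DecidableEq F]
    (hq : Fintype.card F = q) (φ : F ≃ Fin q) (hφ : (φ 0 : ℕ) = 0)
    (hδd : δ ≤ d) (D : Submodule F (Matrix (Fin n) (Fin s) F))
    (hdim : Module.finrank F D = d) :
    (∀ A m : Fin n → ℕ, (∀ j, A j ≤ s) → (∑ j, A j) + δ = d →
        (∀ j, m j < q ^ (A j)) →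
        Nat.card {Ω : Matrix (Fin n) (Fin s) F // Ω ∈ D ∧
          ∀ j, (m j : ℝ) / (q : ℝ) ^ (A j) ≤ coordOf φ Ω j ∧
            coordOf φ Ω j < ((m j : ℝ) + 1) / (q : ℝ) ^ (A j)} = q ^ δ) ↔
      (∀ Ω ∈ dualCode D, Ω ≠ 0 → d - δ + 1 ≤ rhoMat Ω) := by
  classical
  have hq2 : 1 < q := hq ▸ Fintype.one_lt_card
  have hq0 : 0 < q := by omega
  have hcardD : Nat.card D = q ^ d := by
    rw [RTAux.card_submodule hq D, hdim]
  have hdle : d ≤ n * s := by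
    have := Submodule.finrank_le D
    rw [RTAux.finrank_total, hdim] at this
    exact this
  -- box condition vs digit condition
  have hbox : ∀ (A m : Fin n → ℕ), (∀ j, A j ≤ s) → (∀ j, m j < q ^ A j) →
      ∀ Ω : Matrix (Fin n) (Fin s) F,
        ((∀ j, (m j : ℝ) / (q : ℝ) ^ (A j) ≤ coordOf φ Ω j ∧
            coordOf φ Ω j < ((m j : ℝ) + 1) / (q : ℝ) ^ (A j)) ↔
          (∀ j, RTAux.topval φ (A j) (Ω j) = m j)) := by
    intro A m hA hm Ω
    apply forall_congr'
    intro j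
    rw [RTAux.coordOf_eq hq0 φ Ω j]
    exact RTAux.box_iff hq0 φ (hA j) (hm j) (Ω j)
  constructor
  · -- boxes are fair ⟹ dual weight bound
    intro h Ω' hΩ' hne
    by_contra hlt
    push_neg at hlt
    have hrho : (∑ j, rhoRow (Ω' j)) ≤ d - δ := by
      have : rhoMat Ω' = ∑ j, rhoRow (Ω' j) := rfl
      omega
    obtain ⟨A, hBA, hAs, hSig⟩ := RTAux.pad n s (d - δ - ∑ j, rhoRow (Ω' j))
      (fun j => rhoRow (Ω' j)) (fun j => RTAux.rhoRow_le_s (Ω' j))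
      (by
        have hred : (∑ j, (fun j => rhoRow (Ω' j)) j) = ∑ j, rhoRow (Ω' j) := rfl
        omega)
    have hSigA : (∑ j, A j) = d - δ := by
      have hred : (∑ j, (fun j => rhoRow (Ω' j)) j) = ∑ j, rhoRow (Ω' j) := rfl
      omega
    have hvalid : (∑ j, A j) + δ = d := by omega
    have hcount : ∀ m : Fin n → ℕ, (∀ j, m j < q ^ A j) →
        Nat.card {Ω : Matrix (Fin n) (Fin s) F // Ω ∈ D ∧
          ∀ j, RTAux.topval φ (A j) (Ω j) = m j} = q ^ δ := by
      intro m hm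
      rw [← h A m hAs hvalid hm]
      exact Nat.card_congr (Equiv.subtypeEquivRight fun Ω =>
        (and_congr_right fun _ => (hbox A m hAs hm Ω))).symm
    have hmap := (RTAux.count_iff hq hq0 φ hAs D hcardD hvalid).mp hcount
    have hbot := (RTAux.map_eq_iff hq hq2 hAs D).mp hmap
    have hmem : Ω' ∈ dualCode D ⊓ RTAux.Vsub F s A :=
      ⟨hΩ', RTAux.mem_Vsub_iff_rho.mpr fun j => le_trans (le_refl _) (hBA j)⟩
    rw [hbot] at hmem
    exact hne (Submodule.mem_bot F |>.mp hmem)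
  · -- dual weight bound ⟹ boxes are fair
    intro h A m hAs hvalid hm
    have hbot : dualCode D ⊓ RTAux.Vsub F s A = ⊥ := by
      rw [eq_bot_iff]
      rintro x ⟨hx1, hx2⟩
      rw [Submodule.mem_bot]
      by_contra hx0
      have h1 := h x hx1 hx0
      have h2 : rhoMat x ≤ ∑ j, A j := by
        have : rhoMat x = ∑ j, rhoRow (x j) := rfl
        rw [this]
        exact Finset.sum_le_sum fun j _ => RTAux.mem_Vsub_iff_rho.mp hx2 j
      omega
    have hmap := (RTAux.map_eq_iff hq hq2 hAs D).mpr hbot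
    have hcount := (RTAux.count_iff hq hq0 φ hAs D hcardD hvalid).mpr hmap m hm
    rw [← hcount]
    exact Nat.card_congr (Equiv.subtypeEquivRight fun Ω =>
      (and_congr_right fun _ => (hbox A m hAs hm Ω)))
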